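/- Every polynomial p ∈ ℝ[x₁,…,xₙ] that vanishes identically on the unit sphere {x : Σᵢ xᵢ² = 1} lies in the ideal generated by Σᵢ xᵢ² − 1. -/

import Mathlib

open MvPolynomial

/-- A real multivariate polynomial vanishing on the open unit ball is zero. -/
lemma aux_zero_of_ball {m : ℕ} (a : MvPolynomial (Fin m) ℝ)
    (h : ∀ y : Fin m → ℝ, ∑ i, y i ^ 2 < 1 → eval y a = 0) : a = 0 := by
  have key : ∀ y : Fin m → ℝ, eval y a = 0 := by
    intro y
    set s : ℝ := ∑ i, y i ^ 2 with hs
    have hs0 : 0 ≤ s := Finset.sum_nonneg fun i _ => sq_nonneg _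
    set ε : ℝ := (1 + s)⁻¹ with hε
    have hεpos : 0 < ε := by positivity
    set f : Polynomial ℝ :=
      MvPolynomial.eval₂ Polynomial.C (fun i => Polynomial.C (y i) * Polynomial.X) a with hf
    have hfeval : ∀ t : ℝ, Polynomial.eval t f = eval (fun i => y i * t) a := by
      intro t
      rw [hf, ← Polynomial.coe_evalRingHom, MvPolynomial.eval₂_comp_left]
      simp [MvPolynomial.eval₂_eq, MvPolynomial.eval_eq]
    have hroots : Set.Ioo (0 : ℝ) ε ⊆ {t | Polynomial.IsRoot f t} := by
      intro t ht
      have ht0 : 0 < t := ht.1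
      have htε : t < ε := ht.2
      have hes : ε * (1 + s) = 1 := inv_mul_cancel₀ (by positivity)
      have hsmall : ∑ i, (y i * t) ^ 2 < 1 := by
        have hsum : ∑ i, (y i * t) ^ 2 = s * t ^ 2 := by
          rw [hs, Finset.sum_mul]; ring_nf
          exact Finset.sum_congr rfl fun i _ => by ring
        rw [hsum]
        nlinarith [sq_nonneg t, sq_nonneg ε, mul_pos ht0 ht0]
      have := h (fun i => y i * t) hsmall
      simpa [Polynomial.IsRoot, hfeval t] using this
    have hfzero : f = 0 := by
      apply Polynomial.eq_zero_of_infinite_isRoot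
      exact Set.Infinite.mono hroots (Set.Ioo_infinite hεpos)
    have h1 := hfeval 1
    rw [hfzero] at h1
    simpa using h1.symm
  apply MvPolynomial.funext
  intro x
  rw [key x, map_zero]

/-- Every polynomial vanishing identically on the unit sphere lies in the ideal
generated by Σᵢ xᵢ² − 1. -/
theorem stmt_8 (n : ℕ) (hn : 1 ≤ n) (p : MvPolynomial (Fin n) ℝ)
    (hvan : ∀ x : Fin n → ℝ, ∑ i, x i ^ 2 = 1 → eval x p = 0) :
    p ∈ Ideal.span {(∑ i, X i ^ 2 - 1 : MvPolynomial (Fin n) ℝ)} := by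
  obtain ⟨m, rfl⟩ : ∃ m, n = m + 1 := ⟨n - 1, by omega⟩
  rw [Ideal.mem_span_singleton]
  set c : MvPolynomial (Fin m) ℝ := (∑ i, X i ^ 2) - 1 with hc
  set D : Polynomial (MvPolynomial (Fin m) ℝ) := Polynomial.X ^ 2 + Polynomial.C c with hD
  have heS : MvPolynomial.finSuccEquiv ℝ m ((∑ i, X i ^ 2 - 1 : MvPolynomial (Fin (m + 1)) ℝ))
      = D := by
    rw [map_sub, map_sum, map_one, hD, hc]
    rw [Fin.sum_univ_succ]
    simp only [map_pow, finSuccEquiv_X_zero, finSuccEquiv_X_succ, map_sub, map_sum, map_one]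
    ring
  have hmonic : D.Monic := by
    rw [hD]
    refine Polynomial.monic_X_pow_add ?_
    exact lt_of_le_of_lt Polynomial.degree_C_le (by norm_num)
  have hDdeg : D.degree = 2 := by
    rw [hD]; exact Polynomial.degree_X_pow_add_C (by norm_num) c
  set P := MvPolynomial.finSuccEquiv ℝ m p with hP
  set Rr := P %ₘ D with hRr
  set Q := P /ₘ D with hQ
  have hdiv : Rr + D * Q = P := Polynomial.modByMonic_add_div P D
  have hdeg : Rr.degree < 2 := by
    rw [← hDdeg]; exact Polynomial.degree_modByMonic_lt P hmonic
  have hdeg1 : Rr.degree ≤ 1 := by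
    rw [Polynomial.degree_le_iff_coeff_zero]
    intro k hk
    have hdeg' : Rr.degree < ((2 : ℕ) : WithBot ℕ) := by exact_mod_cast hdeg
    rw [Polynomial.degree_lt_iff_coeff_zero Rr 2] at hdeg'
    have hk' : (1 : ℕ) < k := by exact_mod_cast hk
    exact hdeg' k (by omega)
  set a : MvPolynomial (Fin m) ℝ := Rr.coeff 0 with ha
  set b : MvPolynomial (Fin m) ℝ := Rr.coeff 1 with hb
  have hRform : Rr = Polynomial.C b * Polynomial.X + Polynomial.C a :=
    Polynomial.eq_X_add_C_of_degree_le_one hdeg1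
  have hcev : ∀ y : Fin m → ℝ, eval y c = (∑ i, y i ^ 2) - 1 := by
    intro y; rw [hc]; simp
  -- evaluation identity
  have hv : ∀ (y : Fin m → ℝ) (t : ℝ), t ^ 2 + ∑ i, y i ^ 2 = 1 →
      eval y a + eval y b * t = 0 := by
    intro y t hyt
    have hsph : ∑ i, (Fin.cons t y : Fin (m + 1) → ℝ) i ^ 2 = 1 := by
      rw [Fin.sum_univ_succ]
      simpa using hyt
    have h0 := hvan (Fin.cons t y) hsph
    rw [MvPolynomial.eval_eq_eval_mv_eval'] at h0
    rw [← hP, ← hdiv, hRform] at h0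
    have hDev : Polynomial.eval t (Polynomial.map (eval y) D) = 0 := by
      rw [hD]
      simp only [Polynomial.map_add, Polynomial.map_pow, Polynomial.map_X, Polynomial.map_C,
        Polynomial.eval_add, Polynomial.eval_pow, Polynomial.eval_X, Polynomial.eval_C]
      rw [hcev y]
      linarith
    simp only [Polynomial.map_add, Polynomial.map_mul, Polynomial.map_C, Polynomial.map_X,
      Polynomial.eval_add, Polynomial.eval_mul, Polynomial.eval_C, Polynomial.eval_X,
      hDev, zero_mul] at h0
    linarith [h0]
  -- a and b vanish on the open ball
  have hab : ∀ y : Fin m → ℝ, ∑ i, y i ^ 2 < 1 → eval y a = 0 ∧ eval y b = 0 := by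
    intro y hy
    set t : ℝ := Real.sqrt (1 - ∑ i, y i ^ 2) with htdef
    have ht2 : t ^ 2 = 1 - ∑ i, y i ^ 2 := Real.sq_sqrt (by linarith)
    have htpos : 0 < t := Real.sqrt_pos.mpr (by linarith)
    have h1 := hv y t (by linarith)
    have h2 := hv y (-t) (by rw [neg_pow]; simp; linarith)
    constructor
    · nlinarith [h1, h2]
    · nlinarith [h1, h2, htpos]
  have ha0 : a = 0 := aux_zero_of_ball a fun y hy => (hab y hy).1
  have hb0 : b = 0 := aux_zero_of_ball b fun y hy => (hab y hy).2
  have hR0 : Rr = 0 := by rw [hRform, ha0, hb0]; simp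
  have hdvd : D ∣ P := ⟨Q, by rw [← hdiv, hR0, zero_add]⟩
  rw [← heS] at hdvd
  have := map_dvd (MvPolynomial.finSuccEquiv ℝ m).symm.toAlgHom hdvd
  simpa [hP] using this
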